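/- Consider the M-FSIG with fixed N, K = N, channel gains satisfying |h_{m,n,k}| > 0 for all m, n, k, powers P_n > 0, noise N0 > 0, and weights w_n > 0, and suppose the set P_e of pure Nash equilibria is nonempty. Let ã ∈ P_e attain min_{a ∈ P_e} W(a) and let S_ã be its set of sharing users. Then min_{a ∈ P_e} W(a) / max_{a ∈ {1,…,K}^N} W(a) ≥ [Σ_{n ∉ S_ã} w_n·log₂(1 + (P_n/N0)·|h_{n,n,(K−M+1)}|²)] / [Σ_{n=1}^N w_n·log₂(1 + (P_n/N0)·|h_{n,n,(K)}|²)]. -/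

import Mathlib

open MeasureTheory ProbabilityTheory Filter

/-- The cumulative distribution function of a real random variable `X` under `μ`. -/
noncomputable def cdfOf {Ω : Type*} [MeasurableSpace Ω] (μ : Measure Ω) (X : Ω → ℝ) : ℝ → ℝ :=
  fun x => (μ {ω | X ω ≤ x}).toReal

/-- `orderStat v j` is the `j`-th smallest value (1-indexed) among `v 0, …, v (K-1)`. -/
noncomputable def orderStat {K : ℕ} (v : Fin K → ℝ) (j : ℕ) : ℝ :=
  ((Finset.univ.val.map v).sort (· ≤ ·)).getD (j - 1) 0

/-- A finite family of random variables is `m`-dependent: every subfamily whose indices are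
pairwise more than `m` apart is jointly independent. -/
def MDepFam {Ω β : Type*} [MeasurableSpace Ω] [MeasurableSpace β] (μ : Measure Ω) (m : ℕ)
    {K : ℕ} (X : Fin K → Ω → β) : Prop :=
  ∀ S : Finset (Fin K),
    (∀ i ∈ S, ∀ j ∈ S, i ≠ j → (m : ℤ) < |(i : ℤ) - (j : ℤ)|) →
    iIndepFun (fun i : S => X i.1) μ

/-- `F` has an exponentially-dominated tail with parameters `(α, β, lam, γ)`:
`(1 - F x)/(α x^β e^{-lam x^γ}) → 1` as `x → ∞`. -/
def ExpDomTail (F : ℝ → ℝ) (α β lam γ : ℝ) : Prop :=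
  Tendsto (fun x : ℝ => (1 - F x) / (α * x ^ β * Real.exp (-lam * x ^ γ))) atTop (nhds 1)

/-- Interference experienced by user `n` on RE `k` under the profile `a`. -/
noncomputable def interf {N : ℕ} (h : Fin N → Fin N → Fin N → ℂ) (P : Fin N → ℝ)
    (a : Fin N → Fin N) (n k : Fin N) : ℝ :=
  ∑ m ∈ Finset.univ.filter (fun m => m ≠ n ∧ a m = k), ‖h m n k‖ ^ 2 * P m

/-- Achievable rate of user `n` under the profile `a`, treating interference as noise. -/
noncomputable def rate {N : ℕ} (h : Fin N → Fin N → Fin N → ℂ) (P : Fin N → ℝ) (N0 : ℝ)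
    (a : Fin N → Fin N) (n : Fin N) : ℝ :=
  Real.logb 2 (1 + P n * ‖h n n (a n)‖ ^ 2 / (N0 + interf h P a n (a n)))

/-- Pure Nash equilibrium of the game with utilities `u` (utility of user `n` at profile `a`
is `u a n`). -/
def IsPNE {N : ℕ} (u : (Fin N → Fin N) → Fin N → ℝ) (a : Fin N → Fin N) : Prop :=
  ∀ n k, u (Function.update a n k) n ≤ u a n

/-- The M-FSIG utility of user `n` at profile `a`. -/
noncomputable def mfsigUtil {N : ℕ} (h : Fin N → Fin N → Fin N → ℂ) (P : Fin N → ℝ)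
    (N0 : ℝ) (M : ℕ) (a : Fin N → Fin N) (n : Fin N) : ℝ :=
  if orderStat (fun k => ‖h n n k‖) (N - M + 1) ≤ ‖h n n (a n)‖ then
    Real.logb 2 (1 + P n * orderStat (fun k => ‖h n n k‖) (N - M + 1) ^ 2 /
      (N0 + interf h P a n (a n)))
  else 0

/-- Weighted sum-rate `W(a) = ∑ n, w n * R n (a)`. -/
noncomputable def wsum {N : ℕ} (h : Fin N → Fin N → Fin N → ℂ) (P : Fin N → ℝ) (N0 : ℝ)
    (w : Fin N → ℝ) (a : Fin N → Fin N) : ℝ :=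
  ∑ n, w n * rate h P N0 a n

/-- Number of sharing users of a profile `a`. -/
noncomputable def numSharing {N : ℕ} (a : Fin N → Fin N) : ℕ :=
  (Finset.univ.filter fun n => ∃ m, m ≠ n ∧ a m = a n).card

/-! ### Auxiliary lemmas -/

lemma orderStat_length {K : ℕ} (v : Fin K → ℝ) :
    ((Finset.univ.val.map v).sort (· ≤ ·)).length = K := by
  rw [Multiset.length_sort, Multiset.card_map]
  simp

lemma orderStat_mem {K : ℕ} (v : Fin K → ℝ) {j : ℕ} (hj : j - 1 < K) :
    ∃ k, v k = orderStat v j := by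
  set l := (Finset.univ.val.map v).sort (· ≤ ·) with hl
  have hlen : l.length = K := orderStat_length v
  have hmem : orderStat v j ∈ l := by
    rw [orderStat, ← hl, List.getD_eq_getElem _ _ (by omega)]
    exact List.getElem_mem _
  have : orderStat v j ∈ Finset.univ.val.map v := by
    rwa [Multiset.mem_sort] at hmem
  obtain ⟨k, _, hk⟩ := Multiset.mem_map.mp this
  exact ⟨k, hk⟩

lemma le_orderStat_top {K : ℕ} (v : Fin K → ℝ) (k : Fin K) : v k ≤ orderStat v K := by
  set l := (Finset.univ.val.map v).sort (· ≤ ·) with hl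
  have hlen : l.length = K := orderStat_length v
  have hK : 0 < K := k.pos
  have hmem : v k ∈ l := by
    rw [hl, Multiset.mem_sort, Multiset.mem_map]
    exact ⟨k, Finset.mem_univ_val _, rfl⟩
  obtain ⟨i, hvi⟩ := List.mem_iff_get.mp hmem
  have hsorted : l.Pairwise (· ≤ ·) := Multiset.pairwise_sort _ _
  have h2 : l.get i ≤ l.get ⟨K - 1, by omega⟩ :=
    hsorted.rel_get_of_le (by simp only [Fin.le_def]; omega)
  rw [orderStat, ← hl, List.getD_eq_getElem _ _ (by omega)]
  rw [← hvi]
  simpa using h2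

lemma orderStat_zero_of_ge {K : ℕ} (v : Fin K → ℝ) {j : ℕ} (hj : K ≤ j - 1) :
    orderStat v j = 0 := by
  rw [orderStat, List.getD_eq_default]
  rw [orderStat_length]; omega

lemma orderStat_nonneg {K : ℕ} (v : Fin K → ℝ) (hv : ∀ k, 0 ≤ v k) (j : ℕ) :
    0 ≤ orderStat v j := by
  by_cases hj : j - 1 < K
  · obtain ⟨k, hk⟩ := orderStat_mem v hj
    exact hk ▸ hv k
  · rw [orderStat_zero_of_ge v (by omega)]

lemma interf_nonneg {N : ℕ} (h : Fin N → Fin N → Fin N → ℂ) (P : Fin N → ℝ)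
    (hP : ∀ n, 0 < P n) (a : Fin N → Fin N) (n k : Fin N) : 0 ≤ interf h P a n k :=
  Finset.sum_nonneg fun m _ =>
    mul_nonneg (pow_nonneg (norm_nonneg _) 2) (hP m).le

lemma rate_pos {N : ℕ} (h : Fin N → Fin N → Fin N → ℂ) (P : Fin N → ℝ) (N0 : ℝ)
    (hh : ∀ m n k, 0 < ‖h m n k‖) (hP : ∀ n, 0 < P n) (hN0 : 0 < N0)
    (a : Fin N → Fin N) (n : Fin N) : 0 < rate h P N0 a n := by
  have hI := interf_nonneg h P hP a n (a n)
  apply Real.logb_pos one_lt_two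
  have : 0 < P n * ‖h n n (a n)‖ ^ 2 / (N0 + interf h P a n (a n)) :=
    div_pos (mul_pos (hP n) (pow_pos (hh n n (a n)) 2)) (by linarith)
  linarith

lemma rate_le {N : ℕ} (h : Fin N → Fin N → Fin N → ℂ) (P : Fin N → ℝ) (N0 : ℝ)
    (hP : ∀ n, 0 < P n) (hN0 : 0 < N0) (b : Fin N → Fin N) (n : Fin N) :
    rate h P N0 b n ≤
      Real.logb 2 (1 + P n / N0 * orderStat (fun k => ‖h n n k‖) N ^ 2) := by
  have hI := interf_nonneg h P hP b n (b n)
  have habs : ‖h n n (b n)‖ ≤ orderStat (fun k => ‖h n n k‖) N :=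
    le_orderStat_top (fun k => ‖h n n k‖) (b n)
  apply Real.logb_le_logb_of_le one_lt_two
  · have : 0 ≤ P n * ‖h n n (b n)‖ ^ 2 / (N0 + interf h P b n (b n)) :=
      div_nonneg (mul_nonneg (hP n).le (pow_nonneg (norm_nonneg _) 2)) (by linarith)
    linarith
  · have key : P n * ‖h n n (b n)‖ ^ 2 / (N0 + interf h P b n (b n)) ≤
        P n / N0 * orderStat (fun k => ‖h n n k‖) N ^ 2 := by
      rw [div_mul_eq_mul_div]
      gcongr <;> first
        | exact norm_nonneg _
        | exact habs
        | exact (hP n).le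
        | exact mul_nonneg (hP n).le (sq_nonneg _)
        | linarith
    linarith

lemma interf_zero_of_nonsharing {N : ℕ} (h : Fin N → Fin N → Fin N → ℂ) (P : Fin N → ℝ)
    (a : Fin N → Fin N) (n : Fin N) (hns : ¬ ∃ m, m ≠ n ∧ a m = a n) :
    interf h P a n (a n) = 0 := by
  rw [interf, Finset.filter_false_of_mem, Finset.sum_empty]
  intro m _ hm
  exact hns ⟨m, hm⟩

lemma pne_gain {N : ℕ} (h : Fin N → Fin N → Fin N → ℂ) (P : Fin N → ℝ) (N0 : ℝ) (M : ℕ)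
    (hh : ∀ m n k, 0 < ‖h m n k‖) (hP : ∀ n, 0 < P n) (hN0 : 0 < N0)
    (atil : Fin N → Fin N)
    (ha : IsPNE (fun b n => mfsigUtil h P N0 M b n) atil) (n : Fin N) :
    orderStat (fun k => ‖h n n k‖) (N - M + 1) ≤ ‖h n n (atil n)‖ := by
  by_cases hj : (N - M + 1) - 1 < N
  · by_contra hlt
    push_neg at hlt
    obtain ⟨k₀, hk₀⟩ := orderStat_mem (fun k => ‖h n n k‖) hj
    have hspos : 0 < orderStat (fun k => ‖h n n k‖) (N - M + 1) :=
      hk₀ ▸ hh n n k₀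
    have h0 : mfsigUtil h P N0 M atil n = 0 := by
      rw [mfsigUtil, if_neg (not_le.mpr hlt)]
    have hpne := ha n k₀
    simp only [h0] at hpne
    have hIa : 0 ≤ interf h P (Function.update atil n k₀) n k₀ :=
      interf_nonneg h P hP _ n k₀
    have hupd : Function.update atil n k₀ n = k₀ := Function.update_self n k₀ atil
    have hposu : 0 < mfsigUtil h P N0 M (Function.update atil n k₀) n := by
      rw [mfsigUtil, hupd, if_pos (le_of_eq hk₀.symm)]
      apply Real.logb_pos one_lt_two
      have : 0 < P n * orderStat (fun k => ‖h n n k‖) (N - M + 1) ^ 2 /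
          (N0 + interf h P (Function.update atil n k₀) n k₀) :=
        div_pos (mul_pos (hP n) (pow_pos hspos 2)) (by linarith)
      linarith
    linarith
  · push_neg at hj
    rw [orderStat_zero_of_ge _ hj]
    exact norm_nonneg _

/-- deterministic lower bound on the inverse pure price of anarchy of the M-FSIG
in terms of the non-sharing users of a worst pure Nash equilibrium. -/
theorem stmt_7 {N : ℕ} (h : Fin N → Fin N → Fin N → ℂ) (P : Fin N → ℝ) (N0 : ℝ) (M : ℕ)
    (w : Fin N → ℝ)
    (hh : ∀ m n k, 0 < ‖h m n k‖) (hP : ∀ n, 0 < P n) (hN0 : 0 < N0)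
    (hw : ∀ n, 0 < w n)
    (atil : Fin N → Fin N)
    (hmin : IsPNE (fun b n => mfsigUtil h P N0 M b n) atil ∧
      ∀ b, IsPNE (fun c n => mfsigUtil h P N0 M c n) b → wsum h P N0 w atil ≤ wsum h P N0 w b) :
    (∑ n ∈ Finset.univ.filter (fun n => ¬ ∃ m, m ≠ n ∧ atil m = atil n),
        w n * Real.logb 2 (1 + P n / N0 * orderStat (fun k => ‖h n n k‖) (N - M + 1) ^ 2)) /
      (∑ n, w n * Real.logb 2 (1 + P n / N0 * orderStat (fun k => ‖h n n k‖) N ^ 2))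
    ≤ wsum h P N0 w atil / (⨆ b : Fin N → Fin N, wsum h P N0 w b) := by
  obtain ⟨hpne, -⟩ := hmin
  rcases Nat.eq_zero_or_pos N with hN | hN
  · subst hN
    simp [wsum, ciSup_const]
  -- main case
  haveI : Nonempty (Fin N) := ⟨⟨0, hN⟩⟩
  haveI : Nonempty (Fin N → Fin N) := ⟨fun i => i⟩
  set B : ℝ := ∑ n, w n * Real.logb 2
      (1 + P n / N0 * orderStat (fun k => ‖h n n k‖) N ^ 2) with hB
  have hwsum_le : ∀ b : Fin N → Fin N, wsum h P N0 w b ≤ B := by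
    intro b
    exact Finset.sum_le_sum fun n _ =>
      mul_le_mul_of_nonneg_left (rate_le h P N0 hP hN0 b n) (hw n).le
  have hBdd : BddAbove (Set.range fun b : Fin N → Fin N => wsum h P N0 w b) := by
    refine ⟨B, ?_⟩
    rintro x ⟨b, rfl⟩
    exact hwsum_le b
  have hSB : (⨆ b : Fin N → Fin N, wsum h P N0 w b) ≤ B := ciSup_le hwsum_le
  have hWpos : 0 < wsum h P N0 w atil := by
    apply Finset.sum_pos
    · intro n _
      exact mul_pos (hw n) (rate_pos h P N0 hh hP hN0 atil n)
    · exact ⟨⟨0, hN⟩, Finset.mem_univ _⟩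
  have hWS : wsum h P N0 w atil ≤ ⨆ b : Fin N → Fin N, wsum h P N0 w b :=
    le_ciSup hBdd atil
  have hSpos : 0 < ⨆ b : Fin N → Fin N, wsum h P N0 w b := lt_of_lt_of_le hWpos hWS
  -- numerator bound
  have hAW : (∑ n ∈ Finset.univ.filter (fun n => ¬ ∃ m, m ≠ n ∧ atil m = atil n),
      w n * Real.logb 2
        (1 + P n / N0 * orderStat (fun k => ‖h n n k‖) (N - M + 1) ^ 2)) ≤
      wsum h P N0 w atil := by
    rw [wsum]
    have step1 : ∀ n ∈ Finset.univ.filter (fun n => ¬ ∃ m, m ≠ n ∧ atil m = atil n),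
        w n * Real.logb 2
          (1 + P n / N0 * orderStat (fun k => ‖h n n k‖) (N - M + 1) ^ 2) ≤
        w n * rate h P N0 atil n := by
      intro n hn
      rw [Finset.mem_filter] at hn
      apply mul_le_mul_of_nonneg_left _ (hw n).le
      have hI0 : interf h P atil n (atil n) = 0 :=
        interf_zero_of_nonsharing h P atil n hn.2
      rw [rate, hI0, add_zero]
      have hs : orderStat (fun k => ‖h n n k‖) (N - M + 1) ≤
          ‖h n n (atil n)‖ := pne_gain h P N0 M hh hP hN0 atil hpne n
      have hs0 : 0 ≤ orderStat (fun k => ‖h n n k‖) (N - M + 1) :=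
        orderStat_nonneg _ (fun k => norm_nonneg _) _
      apply Real.logb_le_logb_of_le one_lt_two
      · have : 0 ≤ P n / N0 * orderStat (fun k => ‖h n n k‖) (N - M + 1) ^ 2 :=
          mul_nonneg (div_nonneg (hP n).le hN0.le) (pow_nonneg hs0 2)
        linarith
      · have key : P n / N0 * orderStat (fun k => ‖h n n k‖) (N - M + 1) ^ 2 ≤
            P n * ‖h n n (atil n)‖ ^ 2 / N0 := by
          rw [div_mul_eq_mul_div]
          gcongr <;> first
            | exact (hP n).le
            | exact hs0
            | exact hs
            | linarith
        linarith
    calc (∑ n ∈ Finset.univ.filter (fun n => ¬ ∃ m, m ≠ n ∧ atil m = atil n),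
        w n * Real.logb 2
          (1 + P n / N0 * orderStat (fun k => ‖h n n k‖) (N - M + 1) ^ 2))
        ≤ ∑ n ∈ Finset.univ.filter (fun n => ¬ ∃ m, m ≠ n ∧ atil m = atil n),
            w n * rate h P N0 atil n := Finset.sum_le_sum step1
      _ ≤ ∑ n, w n * rate h P N0 atil n := by
          apply Finset.sum_le_sum_of_subset_of_nonneg (Finset.filter_subset _ _)
          intro n _ _
          exact mul_nonneg (hw n).le (rate_pos h P N0 hh hP hN0 atil n).le
  have hA0 : 0 ≤ ∑ n ∈ Finset.univ.filter (fun n => ¬ ∃ m, m ≠ n ∧ atil m = atil n),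
      w n * Real.logb 2
        (1 + P n / N0 * orderStat (fun k => ‖h n n k‖) (N - M + 1) ^ 2) := by
    apply Finset.sum_nonneg
    intro n _
    apply mul_nonneg (hw n).le
    apply Real.logb_nonneg one_lt_two
    have hs0 : 0 ≤ orderStat (fun k => ‖h n n k‖) (N - M + 1) :=
      orderStat_nonneg _ (fun k => norm_nonneg _) _
    have : 0 ≤ P n / N0 * orderStat (fun k => ‖h n n k‖) (N - M + 1) ^ 2 :=
      mul_nonneg (div_nonneg (hP n).le hN0.le) (pow_nonneg hs0 2)
    linarith
  exact div_le_div₀ hWpos.le hAW hSpos hSB
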